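/- For the Holling-type-I eco-epidemiological system S' = λ(t) - μS - SP - βSI, I' = βSI - ηIP - cI, P' = γSP + IP - δ₁P - δ₂P², with positive parameters and λ(t) ∈ [Λℓ, Λu] ⊂ (0,∞): if β Λ^u < c·min{μ, δ₁} and γ Λ^u < δ₁·min{μ, δ₁}, then every nonnegative solution satisfies I(t) + P(t) → 0 as t → ∞. -/

import Mathlib

set_option maxHeartbeats 1000000

open Real Filter Set

lemma expDecayBound {T κ C : ℝ} (hκ : 0 < κ) {f f' : ℝ → ℝ}
    (hf : ∀ t, T ≤ t → HasDerivAt f (f' t) t)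
    (hle : ∀ t, T ≤ t → f' t + κ * f t ≤ C) :
    ∀ t, T ≤ t → f t ≤ (f T - C / κ) * Real.exp (-κ * (t - T)) + C / κ := by
  intro t ht
  set g : ℝ → ℝ := fun s => (f s - C / κ) * Real.exp (κ * s) with hgdef
  have hg : ∀ s, T ≤ s →
      HasDerivAt g ((f' s + κ * f s - C) * Real.exp (κ * s)) s := by
    intro s hs
    have he : HasDerivAt (fun s : ℝ => Real.exp (κ * s)) (κ * Real.exp (κ * s)) s := by
      have := (Real.hasDerivAt_exp (κ * s)).comp s ((hasDerivAt_id s).const_mul κ)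
      exact this.congr_deriv (by ring)
    have h2 := ((hf s hs).sub_const (C / κ)).mul he
    refine h2.congr_deriv ?_
    field_simp
    ring
  have mono : AntitoneOn g (Set.Ici T) := by
    apply antitoneOn_of_deriv_nonpos (convex_Ici T)
    · exact fun s hs => ((hg s hs).differentiableAt.continuousAt.continuousWithinAt)
    · intro s hs
      rw [interior_Ici] at hs
      exact (hg s hs.le).differentiableAt.differentiableWithinAt
    · intro s hs
      rw [interior_Ici] at hs
      rw [(hg s hs.le).deriv]
      have h1 := hle s hs.le
      have h2 := Real.exp_pos (κ * s)
      nlinarith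
  have hm := mono (self_mem_Ici) (mem_Ici.mpr ht) ht
  simp only [hgdef] at hm
  have hE : Real.exp (κ * t) > 0 := Real.exp_pos _
  have key : f t - C / κ ≤ (f T - C / κ) * Real.exp (-κ * (t - T)) := by
    rw [show (-κ * (t - T)) = κ * T - κ * t by ring, Real.exp_sub, ← mul_div_assoc,
      le_div_iff₀ hE]
    linarith [hm]
  linarith

lemma expTendZero {κ : ℝ} (hκ : 0 < κ) (A T : ℝ) :
    Tendsto (fun t => A * Real.exp (-κ * (t - T))) atTop (nhds 0) := by
  have h2 : Tendsto (fun t : ℝ => t - T) atTop atTop :=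
    tendsto_atTop_add_const_right _ _ tendsto_id
  have h3 : Tendsto (fun t : ℝ => κ * (t - T)) atTop atTop := h2.const_mul_atTop hκ
  have h1 : Tendsto (fun t : ℝ => -κ * (t - T)) atTop atBot :=
    (tendsto_neg_atTop_atBot.comp h3).congr fun t => by
      simp [Function.comp, neg_mul]
  have h4 := Real.tendsto_exp_atBot.comp h1
  have h5 := h4.const_mul A
  simpa using h5

theorem stmt12 (μ β c γ δ₁ δ₂ η Λℓ Λu t₀ : ℝ)
    (l : ℝ → ℝ) (S I P : ℝ → ℝ)
    (hμ : 0 < μ) (hβ : 0 < β) (hc : 0 < c) (hγ : 0 < γ)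
    (hδ₁ : 0 < δ₁) (hδ₂ : 0 < δ₂) (hη : 0 < η)
    (hΛℓ : 0 < Λℓ) (hΛ : Λℓ ≤ Λu)
    (hl : Continuous l) (hlb : ∀ t, Λℓ ≤ l t ∧ l t ≤ Λu)
    (hpos : ∀ t, t₀ ≤ t → 0 ≤ S t ∧ 0 ≤ I t ∧ 0 ≤ P t)
    (hS : ∀ t, t₀ ≤ t → HasDerivAt S
      (l t - μ * S t - S t * P t - β * S t * I t) t)
    (hI : ∀ t, t₀ ≤ t → HasDerivAt I
      (β * S t * I t - η * I t * P t - c * I t) t)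
    (hP : ∀ t, t₀ ≤ t → HasDerivAt P
      (γ * S t * P t + I t * P t - δ₁ * P t - δ₂ * (P t) ^ 2) t)
    (hthr1 : β * Λu < c * min μ δ₁)
    (hthr2 : γ * Λu < δ₁ * min μ δ₁) :
    Tendsto (fun t => I t + P t) atTop (nhds 0) := by
  have hΛu : 0 < Λu := lt_of_lt_of_le hΛℓ hΛ
  set B := Λu / μ with hB
  have hmμ : min μ δ₁ ≤ μ := min_le_left _ _
  have hmδ : min μ δ₁ ≤ δ₁ := min_le_right _ _
  have hβB : β * B < c := by
    have h1 : β * Λu < c * μ :=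
      lt_of_lt_of_le hthr1 (mul_le_mul_of_nonneg_left hmμ hc.le)
    rw [hB, mul_div_assoc']
    exact (div_lt_iff₀ hμ).mpr h1
  have hγB : γ * B < δ₁ := by
    have h1 : γ * Λu < δ₁ * μ :=
      lt_of_lt_of_le hthr2 (mul_le_mul_of_nonneg_left hmμ hδ₁.le)
    rw [hB, mul_div_assoc']
    exact (div_lt_iff₀ hμ).mpr h1
  set εS := min ((c - β * B) / (2 * β)) ((δ₁ - γ * B) / (2 * γ)) with hεSdef
  have hεS : 0 < εS := by
    apply lt_min
    · exact div_pos (by linarith) (by linarith)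
    · exact div_pos (by linarith) (by linarith)
  have hεS1 : εS ≤ (c - β * B) / (2 * β) := min_le_left _ _
  have hεS2 : εS ≤ (δ₁ - γ * B) / (2 * γ) := min_le_right _ _
  set κ₁ := c - β * (B + εS) with hκ₁def
  have hκ₁ : 0 < κ₁ := by
    have : β * εS ≤ (c - β * B) / 2 := by
      rw [← mul_le_mul_iff_right₀ hβ] at hεS1
      calc β * εS ≤ β * ((c - β * B) / (2 * β)) := hεS1
        _ = (c - β * B) / 2 := by field_simp
    rw [hκ₁def]; nlinarith
  set ρ := δ₁ - γ * (B + εS) with hρdef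
  have hρ : 0 < ρ := by
    have : γ * εS ≤ (δ₁ - γ * B) / 2 := by
      rw [← mul_le_mul_iff_right₀ hγ] at hεS2
      calc γ * εS ≤ γ * ((δ₁ - γ * B) / (2 * γ)) := hεS2
        _ = (δ₁ - γ * B) / 2 := by field_simp
    rw [hρdef]; nlinarith
  -- Step 1: eventual bound on S
  have hSbound := expDecayBound (C := Λu) hμ hS (fun t ht => by
    obtain ⟨hS0, hI0, hP0⟩ := hpos t ht
    have hlu := (hlb t).2
    nlinarith [mul_nonneg hS0 hP0, mul_nonneg (mul_nonneg hβ.le hS0) hI0])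
  have hevS : ∀ᶠ t in atTop, S t ≤ B + εS := by
    have h0 : Tendsto (fun t => (S t₀ - Λu / μ) * Real.exp (-μ * (t - t₀)) + Λu / μ)
        atTop (nhds (Λu / μ)) := by
      have := (expTendZero hμ (S t₀ - Λu / μ) t₀).add_const (Λu / μ)
      simpa using this
    have hlt : Λu / μ < B + εS := by rw [hB]; linarith
    filter_upwards [h0.eventually (eventually_le_nhds hlt), eventually_ge_atTop t₀]
      with t h1 h2
    calc S t ≤ (S t₀ - Λu / μ) * Real.exp (-μ * (t - t₀)) + Λu / μ := hSbound t h2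
      _ ≤ B + εS := h1
  obtain ⟨T₁, hT₁⟩ := eventually_atTop.mp (hevS.and (eventually_ge_atTop t₀))
  have hT₁0 : t₀ ≤ T₁ := (hT₁ T₁ le_rfl).2
  -- Step 2: I decays
  have hIbound := expDecayBound (C := 0) hκ₁ (fun t ht => hI t ((hT₁ t ht).2))
    (fun t ht => by
      obtain ⟨hSb, ht0⟩ := hT₁ t ht
      obtain ⟨hS0, hI0, hP0⟩ := hpos t ht0
      have h1 : β * S t * I t ≤ β * (B + εS) * I t :=
        mul_le_mul_of_nonneg_right (mul_le_mul_of_nonneg_left hSb hβ.le) hI0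
      have h2 : 0 ≤ η * (I t * P t) := by positivity
      rw [hκ₁def]; nlinarith)
  have hIub : ∀ t, T₁ ≤ t → I t ≤ I T₁ * Real.exp (-κ₁ * (t - T₁)) := by
    intro t ht
    have := hIbound t ht
    simpa using this
  have hItend : Tendsto I atTop (nhds 0) := by
    apply tendsto_of_tendsto_of_tendsto_of_le_of_le' tendsto_const_nhds
      (expTendZero hκ₁ (I T₁) T₁)
    · filter_upwards [eventually_ge_atTop t₀] with t ht
      exact (hpos t ht).2.1
    · filter_upwards [eventually_ge_atTop T₁] with t ht
      exact hIub t ht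
  -- Step 3: P decays
  have hρ2 : 0 < ρ / 2 := by linarith
  have hevI : ∀ᶠ t in atTop, I t ≤ ρ / 2 :=
    hItend.eventually (eventually_le_nhds hρ2)
  obtain ⟨T₂, hT₂⟩ := eventually_atTop.mp (hevI.and (eventually_ge_atTop T₁))
  have hPbound := expDecayBound (C := 0) hρ2
    (fun t ht => hP t ((hT₁ t (hT₂ t ht).2).2))
    (fun t ht => by
      obtain ⟨hIb, ht1⟩ := hT₂ t ht
      obtain ⟨hSb, ht0⟩ := hT₁ t ht1
      obtain ⟨hS0, hI0, hP0⟩ := hpos t ht0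
      have h1 : γ * S t * P t ≤ γ * (B + εS) * P t :=
        mul_le_mul_of_nonneg_right (mul_le_mul_of_nonneg_left hSb hγ.le) hP0
      have h2 : I t * P t ≤ (ρ / 2) * P t := mul_le_mul_of_nonneg_right hIb hP0
      have h3 : 0 ≤ δ₂ * (P t) ^ 2 := by positivity
      have h4 : γ * (B + εS) = δ₁ - ρ := by rw [hρdef]; ring
      nlinarith)
  have hPtend : Tendsto P atTop (nhds 0) := by
    apply tendsto_of_tendsto_of_tendsto_of_le_of_le' tendsto_const_nhds
      (expTendZero hρ2 (P T₂) T₂)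
    · filter_upwards [eventually_ge_atTop t₀] with t ht
      exact (hpos t ht).2.2
    · filter_upwards [eventually_ge_atTop T₂] with t ht
      have := hPbound t ht
      simpa using this
  have := hItend.add hPtend
  simpa using this
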